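/- Every nonempty extension-set 𝕊 in the signature of stable semantics with |𝕊| ≤ 3 belongs to the c-signature of stable semantics; i.e., if stb(F) = 𝕊 for some AF F, 𝕊 ≠ ∅ and |𝕊| ≤ 3, then there exists a stb-compact AF F' with stb(F') = 𝕊. -/

import Mathlib

structure AF where
  A : Finset ℕ
  R : Set (ℕ × ℕ)
  R_sub : ∀ p ∈ R, p.1 ∈ A ∧ p.2 ∈ A

namespace AF

def cf (F : AF) : Set (Set ℕ) :=
  {S | S ⊆ ↑F.A ∧ ∀ a ∈ S, ∀ b ∈ S, (a, b) ∉ F.R}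

def defends (F : AF) (S : Set ℕ) (a : ℕ) : Prop :=
  ∀ b, (b, a) ∈ F.R → ∃ s ∈ S, (s, b) ∈ F.R

def adm (F : AF) : Set (Set ℕ) :=
  {S | S ∈ F.cf ∧ ∀ a ∈ S, F.defends S a}

def rng (F : AF) (S : Set ℕ) : Set ℕ :=
  S ∪ {b | ∃ s ∈ S, (s, b) ∈ F.R}

def naive (F : AF) : Set (Set ℕ) :=
  {S | S ∈ F.cf ∧ ∀ T ∈ F.cf, S ⊆ T → S = T}

def stb (F : AF) : Set (Set ℕ) :=
  {S | S ∈ F.cf ∧ ∀ a ∈ F.A, a ∉ S → ∃ s ∈ S, (s, a) ∈ F.R}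

def pref (F : AF) : Set (Set ℕ) :=
  {S | S ∈ F.adm ∧ ∀ T ∈ F.adm, S ⊆ T → S = T}

def stage (F : AF) : Set (Set ℕ) :=
  {S | S ∈ F.cf ∧ ¬ ∃ T ∈ F.cf, F.rng S ⊂ F.rng T}

def sem (F : AF) : Set (Set ℕ) :=
  {S | S ∈ F.adm ∧ ¬ ∃ T ∈ F.adm, F.rng S ⊂ F.rng T}

end AF

abbrev Semantics := AF → Set (Set ℕ)

def StandardSemantics : Set Semantics :=
  {AF.naive, AF.stb, AF.stage, AF.pref, AF.sem}

def AFCompact (σ : Semantics) (F : AF) : Prop :=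
  ∀ a ∈ F.A, ∃ S ∈ σ F, a ∈ S

def CAF (σ : Semantics) : Set AF := {F | AFCompact σ F}

def ArgS (𝕊 : Set (Set ℕ)) : Set ℕ := ⋃₀ 𝕊

def PairsS (𝕊 : Set (Set ℕ)) : Set (ℕ × ℕ) :=
  {p | ∃ S ∈ 𝕊, p.1 ∈ S ∧ p.2 ∈ S}

def IsExtensionSet (𝕊 : Set (Set ℕ)) : Prop := (ArgS 𝕊).Finite

def AFStep (F : AF) (a b : ℕ) : Prop := (a, b) ∈ F.R ∨ (b, a) ∈ F.R

def AFConnected (F : AF) : Prop :=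
  ∀ a ∈ F.A, ∀ b ∈ F.A, Relation.ReflTransGen (AFStep F) a b

def sameComp (F : AF) (a b : ℕ) : Prop := Relation.ReflTransGen (AFStep F) a b

def comps (F : AF) : Set (Set ℕ) :=
  {K | ∃ a ∈ F.A, K = {b ∈ (↑F.A : Set ℕ) | sameComp F a b}}

def nopairs (𝕊 : Set (Set ℕ)) (a b : ℕ) : Prop :=
  a ∈ ArgS 𝕊 ∧ b ∈ ArgS 𝕊 ∧ (a, b) ∉ PairsS 𝕊

def compsS (𝕊 : Set (Set ℕ)) : Set (Set ℕ) :=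
  {K | ∃ a ∈ ArgS 𝕊, K = {b ∈ ArgS 𝕊 | Relation.ReflTransGen (nopairs 𝕊) a b}}

noncomputable def sigmaMax (σ : Semantics) (n : ℕ) : ℕ :=
  sSup {k | ∃ F : AF, F.A.card = n ∧ (σ F).ncard = k}

noncomputable def sigmaMaxCon (σ : Semantics) (n : ℕ) : ℕ :=
  sSup {k | ∃ F : AF, F.A.card = n ∧ AFConnected F ∧ (σ F).ncard = k}

noncomputable def sigmaMax2 (σ : Semantics) (n : ℕ) : ℕ :=
  sSup ({k | ∃ F : AF, F.A.card = n ∧ (σ F).ncard = k} \ {sigmaMax σ n})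

def cfSet (𝕊 : Set (Set ℕ)) : Set (Set ℕ) :=
  {S | S ⊆ ArgS 𝕊 ∧ ∀ a ∈ S, ∀ b ∈ S, (a, b) ∈ PairsS 𝕊}

def plusSet (𝕊 : Set (Set ℕ)) : Set (Set ℕ) :=
  {S | S ∈ cfSet 𝕊 ∧ ∀ T ∈ cfSet 𝕊, S ⊆ T → S = T}

def minusSet (𝕊 : Set (Set ℕ)) : Set (Set ℕ) := plusSet 𝕊 \ 𝕊

def Sig (σ : Semantics) : Set (Set (Set ℕ)) := {𝕊 | ∃ F : AF, σ F = 𝕊}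

def cSig (σ : Semantics) : Set (Set (Set ℕ)) :=
  {𝕊 | ∃ F : AF, AFCompact σ F ∧ σ F = 𝕊}

def Pcon (σ : Semantics) (n : ℕ) : Set ℕ :=
  {k | ∃ F : AF, AFCompact σ F ∧ AFConnected F ∧ F.A.card = n ∧ (σ F).ncard = k}

open Classical in
noncomputable def restrictAF (F : AF) (K : Set ℕ) : AF where
  A := F.A.filter (fun a => a ∈ K)
  R := {p | p ∈ F.R ∧ p.1 ∈ K ∧ p.2 ∈ K}
  R_sub := fun p hp => by
    have h := F.R_sub p hp.1
    simp only [Finset.mem_filter]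
    exact ⟨⟨h.1, hp.2.1⟩, ⟨h.2, hp.2.2⟩⟩

def IsExclusionMapping (𝕊 : Set (Set ℕ)) (Rm : Set (ℕ × ℕ)) : Prop :=
  ∃ f : Set ℕ → ℕ,
    (∀ S ∈ minusSet 𝕊, f S ∈ ArgS 𝕊 ∧ f S ∉ S) ∧
    Rm = {p | ∃ S ∈ minusSet 𝕊, p.1 ∈ S ∧ p.2 = f S ∧ p ∉ PairsS 𝕊}

def Independent (𝕊 : Set (Set ℕ)) : Prop :=
  ∃ Rm : Set (ℕ × ℕ), IsExclusionMapping 𝕊 Rm ∧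
    (∀ a b, (a, b) ∈ Rm → (b, a) ∈ Rm → a = b) ∧
    ∀ S ∈ 𝕊, ∀ a ∈ ArgS 𝕊 \ S, ∃ s ∈ S, (s, a) ∉ Rm ∪ PairsS 𝕊

def ConflictExplicit (σ : Semantics) (F : AF) : Prop :=
  ∀ a ∈ F.A, ∀ b ∈ F.A, (a, b) ∉ PairsS (σ F) → (a, b) ∈ F.R ∨ (b, a) ∈ F.R

noncomputable def canonicalCF (𝕊 : Set (Set ℕ)) (h : IsExtensionSet 𝕊) : AF where
  A := h.toFinset
  R := {p | p.1 ∈ ArgS 𝕊 ∧ p.2 ∈ ArgS 𝕊 ∧ p ∉ PairsS 𝕊}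
  R_sub := fun p hp => by
    exact ⟨(Set.Finite.mem_toFinset h).mpr hp.1, (Set.Finite.mem_toFinset h).mpr hp.2.1⟩

def myR (𝕊 : Set (Set ℕ)) (rem : Set ℕ) (u : ℕ) : Set (ℕ × ℕ) :=
  {p | p.1 ∈ ArgS 𝕊 ∧ p.2 ∈ ArgS 𝕊 ∧ p ∉ PairsS 𝕊 ∧ ¬(p.2 = u ∧ p.1 ∈ rem)}

noncomputable def myAF (𝕊 : Set (Set ℕ)) (hfin : (ArgS 𝕊).Finite) (rem : Set ℕ) (u : ℕ) : AF where
  A := hfin.toFinset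
  R := myR 𝕊 rem u
  R_sub := fun p hp => by
    simp only [Set.Finite.mem_toFinset]
    exact ⟨hp.1, hp.2.1⟩

theorem realize (𝕊 : Set (Set ℕ)) (hfin : (ArgS 𝕊).Finite) (rem : Set ℕ) (u : ℕ)
    (hstb : ∀ S ∈ 𝕊, ∀ a ∈ ArgS 𝕊, a ∉ S →
      ∃ s ∈ S, (s, a) ∉ PairsS 𝕊 ∧ (a = u → s ∉ rem))
    (hmax : ∀ E : Set ℕ, E ⊆ ArgS 𝕊 →
      (∀ a ∈ E, ∀ b ∈ E, (a, b) ∈ PairsS 𝕊) →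
      (∀ a ∈ ArgS 𝕊, a ∉ E → ∃ e ∈ E, (e, a) ∉ PairsS 𝕊 ∧ ¬(a = u ∧ e ∈ rem)) →
      E ∈ 𝕊) :
    ∃ F' : AF, AFCompact AF.stb F' ∧ AF.stb F' = 𝕊 := by
  have harg : ∀ S ∈ 𝕊, S ⊆ ArgS 𝕊 := fun S hS => Set.subset_sUnion_of_mem hS
  have hA : ((myAF 𝕊 hfin rem u).A : Set ℕ) = ArgS 𝕊 := Set.Finite.coe_toFinset hfin
  have key : AF.stb (myAF 𝕊 hfin rem u) = 𝕊 := by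
    apply Set.eq_of_subset_of_subset
    · intro E hE
      obtain ⟨⟨hEsub, hEcf⟩, hEatt⟩ := hE
      rw [hA] at hEsub
      have compat : ∀ a ∈ E, ∀ b ∈ E, (a, b) ∈ PairsS 𝕊 := by
        intro a ha b hb
        by_contra hp
        by_cases hab : a = b
        · subst hab
          obtain ⟨T, hT, haT⟩ := hEsub ha
          exact hp ⟨T, hT, haT, haT⟩
        · have hba : (b, a) ∉ PairsS 𝕊 := fun ⟨T, hT, h1, h2⟩ => hp ⟨T, hT, h2, h1⟩
          have h1 : (a, b) ∉ (myAF 𝕊 hfin rem u).R := hEcf a ha b hb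
          have h2 : (b, a) ∉ (myAF 𝕊 hfin rem u).R := hEcf b hb a ha
          have hc1 : b = u ∧ a ∈ rem := by
            by_contra hc
            exact h1 ⟨hEsub ha, hEsub hb, hp, hc⟩
          have hc2 : a = u ∧ b ∈ rem := by
            by_contra hc
            exact h2 ⟨hEsub hb, hEsub ha, hba, hc⟩
          exact hab (hc2.1.trans hc1.1.symm)
      have maximal : ∀ a ∈ ArgS 𝕊, a ∉ E →
          ∃ e ∈ E, (e, a) ∉ PairsS 𝕊 ∧ ¬(a = u ∧ e ∈ rem) := by
        intro a ha hna
        obtain ⟨s, hs, hR⟩ := hEatt a ((Set.Finite.mem_toFinset hfin).mpr ha) hna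
        exact ⟨s, hs, hR.2.2.1, hR.2.2.2⟩
      exact hmax E hEsub compat maximal
    · intro S hS
      refine ⟨⟨?_, ?_⟩, ?_⟩
      · rw [hA]; exact harg S hS
      · intro a ha b hb hR
        exact hR.2.2.1 ⟨S, hS, ha, hb⟩
      · intro a haA hna
        have haArgs : a ∈ ArgS 𝕊 := (Set.Finite.mem_toFinset hfin).mp haA
        obtain ⟨s, hs, hp, hi⟩ := hstb S hS a haArgs hna
        exact ⟨s, hs, harg S hS hs, haArgs, hp, fun h => hi h.1 h.2⟩
  refine ⟨myAF 𝕊 hfin rem u, ?_, key⟩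
  intro a haA
  rw [key]
  obtain ⟨T, hT, haT⟩ := (Set.Finite.mem_toFinset hfin).mp haA
  exact ⟨T, hT, haT⟩

theorem witness (𝕊 : Set (Set ℕ)) (S₁ S₂ S₃ : Set ℕ) (E : Set ℕ)
    (hmem : ∀ T ∈ 𝕊, T = S₁ ∨ T = S₂ ∨ T = S₃)
    (hcompat : ∀ a ∈ E, ∀ b ∈ E, (a, b) ∈ PairsS 𝕊)
    (h2 : ∃ e ∈ E, e ∉ S₂) (h3 : ∃ e ∈ E, e ∉ S₃)
    (e₁ : ℕ) (he₁ : e₁ ∈ E) (h1 : e₁ ∉ S₁) :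
    e₁ ∈ S₂ ∧ e₁ ∈ S₃ := by
  constructor
  · by_contra h12
    obtain ⟨e₃, he₃, h33⟩ := h3
    obtain ⟨T, hT, hx, hy⟩ := hcompat e₃ he₃ e₁ he₁
    rcases hmem T hT with rfl | rfl | rfl
    · exact h1 hy
    · exact h12 hy
    · exact h33 hx
  · by_contra h13
    obtain ⟨e₂, he₂, h22⟩ := h2
    obtain ⟨T, hT, hx, hy⟩ := hcompat e₂ he₂ e₁ he₁
    rcases hmem T hT with rfl | rfl | rfl
    · exact h1 hy
    · exact h22 hx
    · exact h13 hy

theorem eqcase (𝕊 : Set (Set ℕ)) (S₁ E : Set ℕ) (hS₁ : S₁ ∈ 𝕊) (hsub : E ⊆ S₁)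
    (hm : ∀ a ∈ ArgS 𝕊, a ∉ E → ∃ e ∈ E, (e, a) ∉ PairsS 𝕊) : E = S₁ := by
  refine Set.Subset.antisymm hsub fun a ha => ?_
  by_contra hna
  obtain ⟨e, he, hep⟩ := hm a (Set.subset_sUnion_of_mem hS₁ ha) hna
  exact hep ⟨S₁, hS₁, hsub he, ha⟩

theorem at_most_three_stable_extensions_compact (𝕊 : Set (Set ℕ)) (F : AF)
    (hF : AF.stb F = 𝕊) (hne : 𝕊 ≠ ∅) (hcard : 𝕊.ncard ≤ 3) :
    ∃ F' : AF, AFCompact AF.stb F' ∧ AF.stb F' = 𝕊 := by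
  have hfin : (ArgS 𝕊).Finite := by
    apply Set.Finite.subset F.A.finite_toSet
    rintro a ⟨T, hT, haT⟩
    rw [← hF] at hT
    exact hT.1.1 haT
  have tight : ∀ S ∈ 𝕊, ∀ a ∈ ArgS 𝕊, a ∉ S → ∃ s ∈ S, (s, a) ∉ PairsS 𝕊 := by
    intro S hS a ha hna
    rw [← hF] at hS
    have haA : a ∈ F.A := by
      obtain ⟨T, hT, haT⟩ := ha
      rw [← hF] at hT
      exact hT.1.1 haT
    obtain ⟨s, hs, hsa⟩ := hS.2 a haA hna
    refine ⟨s, hs, ?_⟩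
    rintro ⟨T, hT, h1, h2⟩
    rw [← hF] at hT
    exact hT.1.2 s h1 a h2 hsa
  have hfinS : 𝕊.Finite :=
    Set.Finite.subset hfin.finite_subsets (fun S hS => Set.subset_sUnion_of_mem hS)
  have h0 : 0 < 𝕊.ncard := (Set.ncard_pos hfinS).mpr (Set.nonempty_iff_ne_empty.mpr hne)
  obtain ⟨S₁, S₂, S₃, h𝕊⟩ : ∃ S₁ S₂ S₃ : Set ℕ, 𝕊 = {S₁, S₂, S₃} := by
    have h123 : 𝕊.ncard = 1 ∨ 𝕊.ncard = 2 ∨ 𝕊.ncard = 3 := by omega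
    rcases h123 with h | h | h
    · obtain ⟨a, ha⟩ := Set.ncard_eq_one.mp h
      exact ⟨a, a, a, by rw [ha]; simp⟩
    · obtain ⟨a, b, _, hab⟩ := Set.ncard_eq_two.mp h
      exact ⟨a, b, b, by rw [hab]; simp⟩
    · obtain ⟨a, b, c, _, _, _, habc⟩ := Set.ncard_eq_three.mp h
      exact ⟨a, b, c, habc⟩
  have hS₁ : S₁ ∈ 𝕊 := by rw [h𝕊]; simp
  have hS₂ : S₂ ∈ 𝕊 := by rw [h𝕊]; simp
  have hS₃ : S₃ ∈ 𝕊 := by rw [h𝕊]; simp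
  have hmem : ∀ T ∈ 𝕊, T = S₁ ∨ T = S₂ ∨ T = S₃ := by
    intro T hT
    rw [h𝕊] at hT
    simpa using hT
  by_cases hB : (∃ x, x ∈ S₂ ∧ x ∈ S₃ ∧ x ∉ S₁) ∧ (∃ y, y ∈ S₁ ∧ y ∈ S₃ ∧ y ∉ S₂) ∧
      (∃ z, z ∈ S₁ ∧ z ∈ S₂ ∧ z ∉ S₃)
  · -- Case B: remove attacks from rem onto u
    obtain ⟨⟨x, hx2, hx3, hx1⟩, ⟨y, hy1, hy3, hy2⟩, ⟨z, hz1, hz2, hz3⟩⟩ := hB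
    obtain ⟨u, hu1, hup⟩ := tight S₁ hS₁ x ⟨S₂, hS₂, hx2⟩ hx1
    have hu2 : u ∉ S₂ := fun h => hup ⟨S₂, hS₂, h, hx2⟩
    have hu3 : u ∉ S₃ := fun h => hup ⟨S₃, hS₃, h, hx3⟩
    obtain ⟨t, ht2, htp⟩ := tight S₂ hS₂ y ⟨S₁, hS₁, hy1⟩ hy2
    have ht1 : t ∉ S₁ := fun h => htp ⟨S₁, hS₁, h, hy1⟩
    have ht3 : t ∉ S₃ := fun h => htp ⟨S₃, hS₃, h, hy3⟩
    obtain ⟨v, hv3, hvp⟩ := tight S₃ hS₃ z ⟨S₁, hS₁, hz1⟩ hz3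
    have hv1 : v ∉ S₁ := fun h => hvp ⟨S₁, hS₁, h, hz1⟩
    have hv2 : v ∉ S₂ := fun h => hvp ⟨S₂, hS₂, h, hz2⟩
    apply realize 𝕊 hfin ((S₁ ∩ S₂) ∪ (S₁ ∩ S₃) ∪ (S₂ ∩ S₃)) u
    · -- hstb
      intro S hS a ha hna
      rcases hmem S hS with h | h | h <;> rw [h] at hna ⊢
      · obtain ⟨w, hw, hp⟩ := tight S₁ hS₁ a ha hna
        exact ⟨w, hw, hp, fun hau => absurd hu1 (hau ▸ hna)⟩
      · by_cases hau : a = u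
        · subst hau
          refine ⟨t, ht2, ?_, fun _ => ?_⟩
          · rintro ⟨T, hT, hc1, hc2⟩
            rcases hmem T hT with rfl | rfl | rfl
            · exact ht1 hc1
            · exact hna hc2
            · exact ht3 hc1
          · rintro ((⟨h, -⟩ | ⟨h, -⟩) | ⟨-, h⟩)
            · exact ht1 h
            · exact ht1 h
            · exact ht3 h
        · obtain ⟨w, hw, hp⟩ := tight S₂ hS₂ a ha hna
          exact ⟨w, hw, hp, fun h => absurd h hau⟩
      · by_cases hau : a = u
        · subst hau
          refine ⟨v, hv3, ?_, fun _ => ?_⟩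
          · rintro ⟨T, hT, hc1, hc2⟩
            rcases hmem T hT with rfl | rfl | rfl
            · exact hv1 hc1
            · exact hv2 hc1
            · exact hna hc2
          · rintro ((⟨h, -⟩ | ⟨h, -⟩) | ⟨h, -⟩)
            · exact hv1 h
            · exact hv1 h
            · exact hv2 h
        · obtain ⟨w, hw, hp⟩ := tight S₃ hS₃ a ha hna
          exact ⟨w, hw, hp, fun h => absurd h hau⟩
    · -- hmax
      intro E hEsub hcompat hm
      have hm' : ∀ a ∈ ArgS 𝕊, a ∉ E → ∃ e ∈ E, (e, a) ∉ PairsS 𝕊 := by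
        intro a ha hna
        obtain ⟨e, he, hp, -⟩ := hm a ha hna
        exact ⟨e, he, hp⟩
      by_cases hE1 : E ⊆ S₁
      · rw [eqcase 𝕊 S₁ E hS₁ hE1 hm']; exact hS₁
      by_cases hE2 : E ⊆ S₂
      · rw [eqcase 𝕊 S₂ E hS₂ hE2 hm']; exact hS₂
      by_cases hE3 : E ⊆ S₃
      · rw [eqcase 𝕊 S₃ E hS₃ hE3 hm']; exact hS₃
      exfalso
      obtain ⟨e₁, he₁, hne₁⟩ := Set.not_subset.mp hE1
      obtain ⟨e₂, he₂, hne₂⟩ := Set.not_subset.mp hE2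
      obtain ⟨e₃, he₃, hne₃⟩ := Set.not_subset.mp hE3
      have w1 := witness 𝕊 S₁ S₂ S₃ E hmem hcompat ⟨e₂, he₂, hne₂⟩ ⟨e₃, he₃, hne₃⟩ e₁ he₁ hne₁
      have w2 := witness 𝕊 S₂ S₁ S₃ E
        (fun T hT => by rcases hmem T hT with h | h | h <;> tauto) hcompat
        ⟨e₁, he₁, hne₁⟩ ⟨e₃, he₃, hne₃⟩ e₂ he₂ hne₂
      have w3 := witness 𝕊 S₃ S₁ S₂ E
        (fun T hT => by rcases hmem T hT with h | h | h <;> tauto) hcompat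
        ⟨e₁, he₁, hne₁⟩ ⟨e₂, he₂, hne₂⟩ e₃ he₃ hne₃
      have hErem : ∀ e ∈ E, e ∈ (S₁ ∩ S₂) ∪ (S₁ ∩ S₃) ∪ (S₂ ∩ S₃) := by
        intro e he
        by_cases he1 : e ∈ S₁
        · by_cases he2 : e ∈ S₂
          · exact Or.inl (Or.inl ⟨he1, he2⟩)
          · by_cases he3 : e ∈ S₃
            · exact Or.inl (Or.inr ⟨he1, he3⟩)
            · obtain ⟨T, hT, hc1, hc2⟩ := hcompat e he e₁ he₁
              exfalso
              rcases hmem T hT with rfl | rfl | rfl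
              · exact hne₁ hc2
              · exact he2 hc1
              · exact he3 hc1
        · have he3 : e ∈ S₃ := by
            obtain ⟨T, hT, hc1, hc2⟩ := hcompat e he e₂ he₂
            rcases hmem T hT with rfl | rfl | rfl
            · exact absurd hc1 he1
            · exact absurd hc2 hne₂
            · exact hc1
          have he2 : e ∈ S₂ := by
            obtain ⟨T, hT, hc1, hc2⟩ := hcompat e he e₃ he₃
            rcases hmem T hT with rfl | rfl | rfl
            · exact absurd hc1 he1
            · exact hc1
            · exact absurd hc2 hne₃
          exact Or.inr ⟨he2, he3⟩
      have huE : u ∉ E := by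
        intro h
        rcases hErem u h with (⟨-, h2⟩ | ⟨-, h3⟩) | ⟨h2, -⟩
        · exact hu2 h2
        · exact hu3 h3
        · exact hu2 h2
      obtain ⟨e, he, -, hnot⟩ := hm u ⟨S₁, hS₁, hu1⟩ huE
      exact hnot ⟨rfl, hErem e he⟩
  · -- Case A: no removal needed
    apply realize 𝕊 hfin ∅ 0
    · intro S hS a ha hna
      obtain ⟨s, hs, hp⟩ := tight S hS a ha hna
      exact ⟨s, hs, hp, fun _ => Set.notMem_empty s⟩
    · intro E hEsub hcompat hm
      have hm' : ∀ a ∈ ArgS 𝕊, a ∉ E → ∃ e ∈ E, (e, a) ∉ PairsS 𝕊 := by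
        intro a ha hna
        obtain ⟨e, he, hp, -⟩ := hm a ha hna
        exact ⟨e, he, hp⟩
      by_cases hE1 : E ⊆ S₁
      · rw [eqcase 𝕊 S₁ E hS₁ hE1 hm']; exact hS₁
      by_cases hE2 : E ⊆ S₂
      · rw [eqcase 𝕊 S₂ E hS₂ hE2 hm']; exact hS₂
      by_cases hE3 : E ⊆ S₃
      · rw [eqcase 𝕊 S₃ E hS₃ hE3 hm']; exact hS₃
      exfalso
      obtain ⟨e₁, he₁, hne₁⟩ := Set.not_subset.mp hE1
      obtain ⟨e₂, he₂, hne₂⟩ := Set.not_subset.mp hE2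
      obtain ⟨e₃, he₃, hne₃⟩ := Set.not_subset.mp hE3
      have w1 := witness 𝕊 S₁ S₂ S₃ E hmem hcompat ⟨e₂, he₂, hne₂⟩ ⟨e₃, he₃, hne₃⟩ e₁ he₁ hne₁
      have w2 := witness 𝕊 S₂ S₁ S₃ E
        (fun T hT => by rcases hmem T hT with h | h | h <;> tauto) hcompat
        ⟨e₁, he₁, hne₁⟩ ⟨e₃, he₃, hne₃⟩ e₂ he₂ hne₂
      have w3 := witness 𝕊 S₃ S₁ S₂ E
        (fun T hT => by rcases hmem T hT with h | h | h <;> tauto) hcompat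
        ⟨e₁, he₁, hne₁⟩ ⟨e₂, he₂, hne₂⟩ e₃ he₃ hne₃
      exact hB ⟨⟨e₁, w1.1, w1.2, hne₁⟩, ⟨e₂, w2.1, w2.2, hne₂⟩, ⟨e₃, w3.1, w3.2, hne₃⟩⟩
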